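/- (Fundamental theorem, discrete case.) Let (C, F) be a pointed connected atomic site such that F is representable by an object A. Let J assign to each object X of C the collection of nonempty sieves on X. Then J is a Grothendieck topology on C, and the category of sheaves of sets on the site (C, J) is equivalent to the category of right Aut(A)-sets (sets equipped with a right action of the automorphism group of A, with equivariant maps as morphisms). -/

import Mathlib

open CategoryTheory Opposite

universe u

/-- A pointed connected atomic site: a small category `C` together with a
set-valued functor `F` such that (i) every morphism is a strict epimorphism,
(ii) every `F X` is nonempty, (iii) `F` sends morphisms to surjections, and
(iv) the category of elements of `F` is cofiltered. -/
structure IsPCAS {C : Type u} [SmallCategory C] (F : C ⥤ Type u) : Prop where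
  strict_epi : ∀ {Y X Z : C} (f : Y ⟶ X) (g : Y ⟶ Z),
    (∀ {W : C} (p q : W ⟶ Y), p ≫ f = q ≫ f → p ≫ g = q ≫ g) →
    ∃! u : X ⟶ Z, f ≫ u = g
  nonempty : ∀ X : C, Nonempty (F.obj X)
  surjective : ∀ {X Y : C} (f : X ⟶ Y), Function.Surjective (F.map f)
  cofiltered : IsCofiltered F.Elements

namespace Stmt11Aux

variable {C : Type u} [SmallCategory C] {A : C}

section

variable (hn : ∀ X : C, Nonempty (A ⟶ X))
variable (hs : ∀ {X Y : C} (g : X ⟶ Y) (b : A ⟶ Y), ∃ a : A ⟶ X, a ≫ g = b)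

include hs in
/-- Every endomorphism of `A` is an isomorphism. -/
theorem endoIso (u : A ⟶ A) : IsIso u := by
  obtain ⟨v, hv⟩ := hs u (𝟙 A)
  obtain ⟨w, hw⟩ := hs v (𝟙 A)
  have huw : u = w := by
    have := congrArg (· ≫ u) hw
    simpa [Category.assoc, hv] using this.symm
  exact ⟨v, by rw [huw]; exact hw, hv⟩

/-- The atomic topology: a sieve covers iff it is nonempty. -/
def myJ : GrothendieckTopology C where
  sieves X := {S | ∃ (Y : C) (f : Y ⟶ X), S f}
  top_mem' X := ⟨X, 𝟙 X, trivial⟩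
  pullback_stable' := by
    rintro X Y S f ⟨Z, g, hg⟩
    obtain ⟨a⟩ := hn Y
    obtain ⟨b, hb⟩ := hs g (a ≫ f)
    exact ⟨A, a, show S (a ≫ f) from hb ▸ S.downward_closed hg b⟩
  transitive' := by
    rintro X S ⟨Y, f, hf⟩ R hR
    obtain ⟨W, h, hh⟩ := hR hf
    exact ⟨W, h ≫ f, hh⟩

theorem memJ {X : C} (S : Sieve X) : S ∈ myJ hn hs X ↔ ∃ (Y : C) (f : Y ⟶ X), S f :=
  Iff.rfl

include hn hs in
/-- every arrow from `A` belongs to any covering sieve -/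
theorem memA {X : C} {S : Sieve X} (hS : S ∈ myJ hn hs X) (f : A ⟶ X) : S f := by
  obtain ⟨Y, g, hg⟩ := hS
  obtain ⟨a, ha⟩ := hs g f
  exact ha ▸ S.downward_closed hg a

end

end Stmt11Aux

section
open Stmt11Aux
variable {C : Type u} [SmallCategory C] {A : C}
variable (hn : ∀ X : C, Nonempty (A ⟶ X))
variable (hs : ∀ {X Y : C} (g : X ⟶ Y) (b : A ⟶ Y), ∃ a : A ⟶ X, a ≫ g = b)
variable {P : Cᵒᵖ ⥤ Type u} (hP : Presieve.IsSheaf (myJ hn hs) P)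

namespace Stmt11Aux

include hn hs hP in
/-- Separatedness: sections are determined by their restrictions along points. -/
theorem sep {X : C} {x y : P.obj (op X)}
    (h : ∀ f : A ⟶ X, P.map f.op x = P.map f.op y) : x = y := by
  obtain ⟨f₀⟩ := hn X
  set S : Sieve X := Sieve.generate (Presieve.singleton f₀) with hSdef
  have hmem : S ∈ myJ hn hs X :=
    ⟨A, f₀, ⟨A, 𝟙 A, f₀, Presieve.singleton.mk, Category.id_comp _⟩⟩
  set fam : Presieve.FamilyOfElements P S.arrows := fun Z g _ => P.map g.op x with hfam
  have hcompat : fam.Compatible := by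
    intro Y₁ Y₂ Z g₁ g₂ f₁ f₂ h₁ h₂ hcomm
    simp only [hfam, ← FunctorToTypes.map_comp_apply, ← op_comp, hcomm]
  have hx : fam.IsAmalgamation x := fun Z g hg => rfl
  have hy : fam.IsAmalgamation y := by
    rintro Z g ⟨W, u, l, hl, rfl⟩
    cases hl
    simp only [hfam, op_comp, FunctorToTypes.map_comp_apply, h f₀]
  exact (hP S hmem fam hcompat).unique hx hy

include hn hs hP in
/-- Gluing: equivariant functions on points come from unique sections. -/
theorem glue {X : C} (φ : (A ⟶ X) → P.obj (op A))
    (hφ : ∀ (σ : Aut A) (f : A ⟶ X), φ (σ.hom ≫ f) = P.map σ.hom.op (φ f)) :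
    ∃! x : P.obj (op X), ∀ f : A ⟶ X, P.map f.op x = φ f := by
  -- applying φ's equivariance to arbitrary endomorphisms
  have hendo : ∀ (u : A ⟶ A) (f : A ⟶ X), φ (u ≫ f) = P.map u.op (φ f) := by
    intro u f
    haveI := endoIso hs u
    simpa using hφ (asIso u) f
  obtain ⟨f₀⟩ := hn X
  -- well-definedness
  have wd : ∀ {W : C} (u v : W ⟶ A), u ≫ f₀ = v ≫ f₀ →
      P.map u.op (φ f₀) = P.map v.op (φ f₀) := by
    intro W u v huv
    refine sep hn hs hP (fun k => ?_)
    rw [← FunctorToTypes.map_comp_apply, ← FunctorToTypes.map_comp_apply,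
      ← op_comp, ← op_comp, ← hendo (k ≫ u) f₀, ← hendo (k ≫ v) f₀,
      Category.assoc, Category.assoc, huv]
  set S : Sieve X := Sieve.generate (Presieve.singleton f₀) with hSdef
  have hmem : S ∈ myJ hn hs X :=
    ⟨A, f₀, ⟨A, 𝟙 A, f₀, Presieve.singleton.mk, Category.id_comp _⟩⟩
  have fac : ∀ {Z : C} (g : Z ⟶ X), S.arrows g → ∃ h : Z ⟶ A, h ≫ f₀ = g := by
    rintro Z g ⟨W, u, l, hl, rfl⟩
    cases hl
    exact ⟨u, rfl⟩
  set fam : Presieve.FamilyOfElements P S.arrows :=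
    fun Z g hg => P.map (fac g hg).choose.op (φ f₀) with hfam
  have hcompat : fam.Compatible := by
    intro Y₁ Y₂ Z g₁ g₂ f₁ f₂ h₁ h₂ hcomm
    simp only [hfam, ← FunctorToTypes.map_comp_apply, ← op_comp]
    refine wd _ _ ?_
    rw [Category.assoc, Category.assoc, (fac f₁ h₁).choose_spec, (fac f₂ h₂).choose_spec, hcomm]
  obtain ⟨x, hx, -⟩ := hP S hmem fam hcompat
  have hxval : ∀ f : A ⟶ X, P.map f.op x = φ f := by
    intro f
    obtain ⟨a, ha⟩ := hs f₀ f
    have hfS : S.arrows f := ⟨A, a, f₀, Presieve.singleton.mk, ha⟩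
    rw [hx f hfS]
    show P.map (fac f hfS).choose.op (φ f₀) = φ f
    rw [← hendo (fac f hfS).choose f₀, (fac f hfS).choose_spec]
  exact ⟨x, hxval, fun y hy => sep hn hs hP (fun f => by rw [hy f, hxval f])⟩
end Stmt11Aux
end

section
open Stmt11Aux
variable {C : Type u} [SmallCategory C] {A : C}
variable (hn : ∀ X : C, Nonempty (A ⟶ X))
variable (hs : ∀ {X Y : C} (g : X ⟶ Y) (b : A ⟶ Y), ∃ a : A ⟶ X, a ≫ g = b)

namespace Stmt11Aux

/-- An endomorphism of `A` as an automorphism. -/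
noncomputable def toAut (u : A ⟶ A) : Aut A :=
  @asIso _ _ _ _ u (endoIso hs u)

@[simp] theorem toAut_hom (u : A ⟶ A) : (toAut hs u).hom = u := rfl

/-- The comparison functor: evaluate a sheaf at `A`. -/
def Ψ : Sheaf (myJ hn hs) (Type u) ⥤ Action (Type u) (MonCat.of ((Aut A)ᵐᵒᵖ)) where
  obj P :=
    { V := P.val.obj (op A)
      ρ :=
        { toFun := fun (σ : (Aut A)ᵐᵒᵖ) => P.val.map σ.unop.hom.op
          map_one' := by
            show P.val.map ((1 : (Aut A)ᵐᵒᵖ).unop.hom.op) = _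
            rw [show ((1 : (Aut A)ᵐᵒᵖ).unop.hom.op : op A ⟶ op A) = 𝟙 (op A) from rfl,
              P.val.map_id]
            rfl
          map_mul' := fun (σ τ : (Aut A)ᵐᵒᵖ) => by
            show P.val.map ((σ * τ).unop.hom.op) = _
            rw [End.mul_def,
              show ((σ * τ).unop.hom.op : op A ⟶ op A) =
                τ.unop.hom.op ≫ σ.unop.hom.op from rfl, P.val.map_comp]
            try rfl } }
  map {P Q} α :=
    { hom := α.hom.app (op A)
      comm := fun g => α.hom.naturality g.unop.hom.op }
  map_id _ := rfl
  map_comp _ _ := rfl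

/-- The presheaf of equivariant maps associated with an `Aut A`-set. -/
def PV (S : Action (Type u) (MonCat.of ((Aut A)ᵐᵒᵖ))) : Cᵒᵖ ⥤ Type u where
  obj X := {φ : (A ⟶ X.unop) → S.V //
    ∀ (σ : Aut A) (f : A ⟶ X.unop), φ (σ.hom ≫ f) = S.ρ (MulOpposite.op σ) (φ f)}
  map {X Y} g := TypeCat.ofHom fun φ => ⟨fun h => φ.1 (h ≫ g.unop), fun σ f => by
    dsimp only
    rw [Category.assoc]; exact φ.2 σ (f ≫ g.unop)⟩
  map_id X := by
    apply ConcreteCategory.hom_ext; intro φ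
    exact Subtype.ext (funext fun h => by simp)
  map_comp g₁ g₂ := by
    apply ConcreteCategory.hom_ext; intro φ
    exact Subtype.ext (funext fun h => by simp)

theorem PV_isSheaf (S : Action (Type u) (MonCat.of ((Aut A)ᵐᵒᵖ))) :
    Presieve.IsSheaf (myJ hn hs) (PV S) := by
  intro X Sv hSv fam hcompat
  refine ⟨⟨fun f => (fam f (memA hn hs hSv f)).1 (𝟙 A), fun σ f => ?_⟩, ?_, ?_⟩
  · have hc := hcompat (𝟙 A) σ.hom (memA hn hs hSv (σ.hom ≫ f)) (memA hn hs hSv f)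
      (by simp)
    have hc1 := congrArg (fun ψ => ψ.1 (𝟙 A)) hc
    simp only [PV, Quiver.Hom.unop_op, Category.comp_id, Category.id_comp] at hc1
    change (fam (σ.hom ≫ f) _).1 (𝟙 A) = (fam f _).1 (𝟙 A ≫ σ.hom) at hc1
    simp only [Category.id_comp] at hc1
    show (fam (σ.hom ≫ f) _).1 (𝟙 A) = _
    rw [hc1]
    simpa using ((fam f (memA hn hs hSv f)).2 σ (𝟙 A))
  · intro Z g hg
    refine Subtype.ext (funext fun h => ?_)
    have hc := hcompat (𝟙 A) h (memA hn hs hSv (h ≫ g)) hg (by simp)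
    have hc1 := congrArg (fun ψ => ψ.1 (𝟙 A)) hc
    simp only [PV, Quiver.Hom.unop_op, Category.comp_id, Category.id_comp] at hc1
    change (fam (h ≫ g) _).1 (𝟙 A) = (fam g hg).1 (𝟙 A ≫ h) at hc1
    simp only [Category.id_comp] at hc1
    show (fam (h ≫ g) _).1 (𝟙 A) = (fam g hg).1 h
    rw [hc1]
  · intro y hy
    refine Subtype.ext (funext fun f => ?_)
    have hc1 := congrArg (fun ψ => ψ.1 (𝟙 A)) (hy f (memA hn hs hSv f))
    simp only [PV, Quiver.Hom.unop_op, Category.id_comp] at hc1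
    change y.1 (𝟙 A ≫ f) = (fam f _).1 (𝟙 A) at hc1
    simp only [Category.id_comp] at hc1
    exact hc1

end Stmt11Aux
end

section
open Stmt11Aux
variable {C : Type u} [SmallCategory C] {A : C}
variable (hn : ∀ X : C, Nonempty (A ⟶ X))
variable (hs : ∀ {X Y : C} (g : X ⟶ Y) (b : A ⟶ Y), ∃ a : A ⟶ X, a ≫ g = b)

namespace Stmt11Aux

theorem Ψ_faithful : (Ψ hn hs).Faithful := by
  constructor
  intro P Q α β h
  have hQ : Presieve.IsSheaf (myJ hn hs) Q.val :=
    (isSheaf_iff_isSheaf_of_type _ _).mp Q.cond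
  have hA : α.hom.app (op A) = β.hom.app (op A) := congrArg Action.Hom.hom h
  refine Sheaf.hom_ext ?_
  ext X x
  refine sep hn hs hQ (fun f => ?_)
  have h1 := types_congr_hom (α.hom.naturality f.op) x
  have h2 := types_congr_hom (β.hom.naturality f.op) x
  simp only [types_comp_apply] at h1 h2
  show Q.val.map f.op (α.hom.app X x) = Q.val.map f.op (β.hom.app X x)
  rw [← h1, ← h2, hA]

theorem Ψ_full : (Ψ hn hs).Full := by
  constructor
  intro P Q g
  have hQ : Presieve.IsSheaf (myJ hn hs) Q.val :=
    (isSheaf_iff_isSheaf_of_type _ _).mp Q.cond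
  have key : ∀ (X : Cᵒᵖ) (x : P.val.obj X),
      ∃! y : Q.val.obj X, ∀ f : A ⟶ X.unop, Q.val.map f.op y =
        (g.hom : P.val.obj (op A) ⟶ Q.val.obj (op A)) (P.val.map f.op x) := by
    intro X x
    refine glue hn hs hQ _ (fun σ f => ?_)
    have hc := types_congr_hom (g.comm (MulOpposite.op σ)) (P.val.map f.op x)
    simp only [types_comp_apply] at hc
    have : P.val.map ((σ.hom ≫ f).op) x = P.val.map σ.hom.op (P.val.map f.op x) := by
      rw [op_comp, FunctorToTypes.map_comp_apply]
    rw [this]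
    exact hc
  refine ⟨⟨{ app := fun X => TypeCat.ofHom fun x => (key X x).exists.choose, naturality := ?_ }⟩, ?_⟩
  · intro X Y m
    apply ConcreteCategory.hom_ext; intro x
    simp only [types_comp_apply, ConcreteCategory.hom_ofHom, TypeCat.Fun.mk_apply]
    refine sep hn hs hQ (fun f => ?_)
    rw [(key Y (P.val.map m x)).exists.choose_spec f]
    refine Eq.symm ?_
    have h1 : (Q.val.map m ≫ Q.val.map f.op) ((key X x).exists.choose) =
        Q.val.map (m ≫ f.op) ((key X x).exists.choose) := by
      rw [Q.val.map_comp]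
    have h2 : (m ≫ f.op : X ⟶ op A) = (f ≫ m.unop).op := rfl
    rw [← FunctorToTypes.map_comp_apply, ← FunctorToTypes.map_comp_apply, h2]
    exact (key X x).exists.choose_spec (f ≫ m.unop)
  · apply Action.hom_ext
    apply ConcreteCategory.hom_ext; intro x
    show (key (op A) x).exists.choose = g.hom x
    have := (key (op A) x).exists.choose_spec (𝟙 A)
    rw [op_id, P.val.map_id] at this
    change Q.val.map (𝟙 (op A)) (key (op A) x).exists.choose = g.hom x at this
    simpa using this

theorem Ψ_essSurj : (Ψ hn hs).EssSurj := by
  constructor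
  intro S
  refine ⟨⟨PV S, (isSheaf_iff_isSheaf_of_type _ _).mpr (PV_isSheaf hn hs S)⟩, ⟨?_⟩⟩
  refine Action.mkIso (Iso.mk (TypeCat.ofHom fun (φ : (PV S).obj (op A)) => φ.1 (𝟙 A))
    (TypeCat.ofHom fun s => ⟨fun u => S.ρ (MulOpposite.op (toAut hs u)) s, fun σ f => ?_⟩) ?_ ?_) ?_
  · dsimp only
    have h1 : toAut hs (σ.hom ≫ f) = toAut hs f * σ := Iso.ext rfl
    rw [h1, show (MulOpposite.op (toAut hs f * σ) : (Aut A)ᵐᵒᵖ) =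
      MulOpposite.op σ * MulOpposite.op (toAut hs f) from rfl, map_mul]
    rfl
  · apply ConcreteCategory.hom_ext; intro φ
    refine Subtype.ext (funext fun u => ?_)
    have := (φ.2 (toAut hs u) (𝟙 A)).symm
    show S.ρ (MulOpposite.op (toAut hs u)) (φ.1 (𝟙 A)) = φ.1 u
    simpa using this
  · apply ConcreteCategory.hom_ext; intro s
    show S.ρ (MulOpposite.op (toAut hs (𝟙 A))) s = s
    rw [show (toAut hs (𝟙 A) : Aut A) = 1 from Iso.ext rfl,
      show (MulOpposite.op (1 : Aut A) : (Aut A)ᵐᵒᵖ) = 1 from rfl, map_one]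
    rfl
  · intro g
    apply ConcreteCategory.hom_ext; intro φ
    show ((PV S).map g.unop.hom.op φ).1 (𝟙 A) = S.ρ g (φ.1 (𝟙 A))
    have h1 : ((PV S).map g.unop.hom.op φ).1 (𝟙 A) = φ.1 (𝟙 A ≫ g.unop.hom) := rfl
    rw [h1, Category.id_comp]
    have h2 := φ.2 g.unop (𝟙 A)
    rw [Category.comp_id] at h2
    rw [h2]
    rfl

end Stmt11Aux
end


/-- Fundamental theorem, discrete case: for a pointed connected atomic site
`(C, F)` with `F` representable by `A`, the nonempty sieves form a
Grothendieck topology `J` on `C`, and the topos of sheaves on `(C, J)` is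
equivalent to the category of right `Aut(A)`-sets, i.e. left
`(Aut A)ᵐᵒᵖ`-sets. -/
theorem stmt11 {C : Type u} [SmallCategory C] (F : C ⥤ Type u)
    (hF : IsPCAS F) (A : C) (θ : coyoneda.obj (op A) ≅ F) :
    ∃ J : GrothendieckTopology C,
      (∀ (X : C) (S : Sieve X), S ∈ J X ↔ ∃ (Y : C) (f : Y ⟶ X), S f) ∧
      Nonempty (Sheaf J (Type u) ≌ Action (Type u) (MonCat.of ((Aut A)ᵐᵒᵖ))) := by
  have hn : ∀ X : C, Nonempty (A ⟶ X) := fun X =>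
    (hF.nonempty X).elim (fun z => ⟨θ.inv.app X z⟩)
  have hs : ∀ {X Y : C} (g : X ⟶ Y) (b : A ⟶ Y), ∃ a : A ⟶ X, a ≫ g = b := by
    intro X Y g b
    obtain ⟨z, hz⟩ := hF.surjective g (θ.hom.app Y b)
    refine ⟨θ.inv.app X z, ?_⟩
    have hinj : Function.Injective (θ.hom.app Y) := by
      intro p q hpq
      have h1 := types_congr_hom (θ.hom_inv_id_app Y) p
      have h2 := types_congr_hom (θ.hom_inv_id_app Y) q
      simp only [types_comp_apply, types_id_apply] at h1 h2
      rw [← h1, ← h2, hpq]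
    apply hinj
    have hnat := types_congr_hom (θ.hom.naturality g) (θ.inv.app X z)
    simp only [types_comp_apply] at hnat
    have ha : θ.hom.app X (θ.inv.app X z) = z := by
      have := types_congr_hom (θ.inv_hom_id_app X) z
      simpa using this
    calc θ.hom.app Y (θ.inv.app X z ≫ g)
        = F.map g (θ.hom.app X (θ.inv.app X z)) := hnat
      _ = F.map g z := by rw [ha]
      _ = θ.hom.app Y b := hz
  refine ⟨Stmt11Aux.myJ hn hs, fun X S => Iff.rfl, ⟨?_⟩⟩
  haveI := Stmt11Aux.Ψ_faithful hn hs
  haveI := Stmt11Aux.Ψ_full hn hs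
  haveI := Stmt11Aux.Ψ_essSurj hn hs
  haveI : (Stmt11Aux.Ψ hn hs).IsEquivalence := {}
  exact (Stmt11Aux.Ψ hn hs).asEquivalence
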